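/- Let λ ∈ ℂ, let F(z,w) = (z², w² + λ z), and let z ∈ ℂ with |z| = 1. Then the forward orbit {Fⁿ(z,0) : n ∈ ℕ} is a bounded subset of ℂ² if and only if the orbit of 0 under the map w ↦ w² + λ is bounded, i.e. if and only if λ belongs to the Mandelbrot set. -/

import Mathlib

/-- For `F(z,w) = (z², w² + λ z)` and `|z| = 1`, the orbit of `(z,0)` under `F` is bounded
if and only if the orbit of `0` under `w ↦ w² + λ` is bounded, i.e. iff `λ` belongs to
the Mandelbrot set. -/
theorem fiber_bifurcation_is_mandelbrot
    (lam : ℂ) (F : ℂ × ℂ → ℂ × ℂ)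
    (hF : ∀ q : ℂ × ℂ, F q = (q.1 ^ 2, q.2 ^ 2 + lam * q.1))
    (z : ℂ) (hz : ‖z‖ = 1) :
    Bornology.IsBounded (Set.range fun n => F^[n] (z, 0)) ↔
    Bornology.IsBounded (Set.range fun n => (fun w : ℂ => w ^ 2 + lam)^[n] 0) := by
  set g : ℂ → ℂ := fun w => w ^ 2 + lam with hg
  set c : ℕ → ℂ := fun n => g^[n] 0 with hc
  have hznorm : ∀ k : ℕ, ‖z ^ k‖ = 1 := by
    intro k
    rw [norm_pow]
    have : ‖z‖ = 1 := hz
    rw [this, one_pow]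
  have hcs : ∀ n : ℕ, c (n + 1) = (c n) ^ 2 + lam := by
    intro n
    simp only [hc, Function.iterate_succ_apply', hg]
  have key : ∀ n : ℕ, F^[n + 1] (z, 0) = (z ^ 2 ^ (n + 1), c (n + 1) * z ^ 2 ^ n) := by
    intro n
    induction n with
    | zero =>
      have h1 : c 1 = lam := by rw [hcs 0]; simp [hc]
      rw [Function.iterate_one, hF, h1]
      norm_num
    | succ n ih =>
      rw [Function.iterate_succ_apply', ih, hF]
      simp only
      have h1 : (z ^ 2 ^ (n + 1)) ^ 2 = z ^ 2 ^ (n + 2) := by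
        rw [← pow_mul, ← pow_succ]
      have h2 : (z ^ 2 ^ n) ^ 2 = z ^ 2 ^ (n + 1) := by
        rw [← pow_mul, ← pow_succ]
      rw [Prod.mk.injEq]
      constructor
      · exact h1
      · rw [mul_pow, h2, hcs (n + 1)]
        ring
  have normF : ∀ n : ℕ, ‖F^[n + 1] (z, 0)‖ = max 1 ‖c (n + 1)‖ := by
    intro n
    rw [key n, Prod.norm_def]
    simp only [norm_mul, hznorm, mul_one]
  rw [isBounded_iff_forall_norm_le, isBounded_iff_forall_norm_le]
  simp only [Set.forall_mem_range]
  constructor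
  · rintro ⟨C, hC⟩
    refine ⟨C, fun n => ?_⟩
    cases n with
    | zero =>
      have h0 := hC 0
      simp only [Function.iterate_zero, id_eq] at h0 ⊢
      have : ‖((z, 0) : ℂ × ℂ)‖ = 1 := by
        rw [Prod.norm_def]; simp [hz]
      rw [this] at h0
      simp only [hc, Function.iterate_zero, id_eq, norm_zero]
      linarith
    | succ n =>
      have h := hC (n + 1)
      rw [normF n] at h
      exact le_trans (le_max_right 1 _) h
  · rintro ⟨C, hC⟩
    refine ⟨max 1 C, fun n => ?_⟩
    cases n with
    | zero =>
      simp only [Function.iterate_zero, id_eq]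
      have : ‖((z, 0) : ℂ × ℂ)‖ = 1 := by
        rw [Prod.norm_def]; simp [hz]
      rw [this]
      exact le_max_left 1 C
    | succ n =>
      rw [normF n]
      exact max_le_max le_rfl (hC (n + 1))
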